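/- Let a, b ∈ ℝ³ be unit vectors and let η = η_ab ∈ [0, π] be the angle between them. Then the spherical lune on which both inner products are positive has normalized measure μ{s ∈ S² : ⟨a, s⟩ > 0 and ⟨b, s⟩ > 0} = (π − η)/(2π). -/

import Mathlib

open MeasureTheory
open scoped RealInnerProductSpace ENNReal

/-- Euclidean 3-space. -/
noncomputable abbrev E3 := EuclideanSpace ℝ (Fin 3)

/-- The unit sphere `S²` in `ℝ³`. -/
noncomputable abbrev S2 := Metric.sphere (0 : E3) 1

/-- The (unnormalized) rotation-invariant surface measure on `S²`. -/
noncomputable def sphereMeasure : Measure S2 := (volume : Measure E3).toSphere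

/-- The uniform probability measure on `S²`: the rotation-invariant surface measure
normalized to total mass 1. -/
noncomputable def uniformS2 : Measure S2 := (sphereMeasure Set.univ)⁻¹ • sphereMeasure

section Aux

open Set Real intervalIntegral
open scoped Pointwise

theorem LunePP.sq_lt_abs_lt {x R : ℝ} (hR0 : 0 < R) (hx : x ^ 2 < R ^ 2) : -R < x ∧ x < R := by
  have h := Real.sqrt_lt_sqrt (sq_nonneg x) hx
  rw [Real.sqrt_sq_eq_abs, Real.sqrt_sq hR0.le] at h
  exact abs_lt.1 h

/-- Area of a "polar sector" in the plane. -/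
theorem LunePP.sector_area (α β : ℝ) (hα : -π ≤ α) (hαβ : α ≤ β) (hβ : β ≤ π) (t : ℝ)
    (P : ℝ × ℝ → Prop) (hP : MeasurableSet {p : ℝ × ℝ | P p})
    (hchar : ∀ r θ : ℝ, 0 < r → θ ∈ Ioo (-π) π →
      (P (r * Real.cos θ, r * Real.sin θ) ↔ θ ∈ Ioo α β)) :
    volume {p : ℝ × ℝ | p.1 ^ 2 + p.2 ^ 2 < t ∧ P p}
      = ENNReal.ofReal ((β - α) / 2 * t) := by
  rcases le_or_gt t 0 with ht | ht
  · have h1 : {p : ℝ × ℝ | p.1 ^ 2 + p.2 ^ 2 < t ∧ P p} = ∅ := by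
      ext p; simp only [mem_setOf_eq, mem_empty_iff_false, iff_false, not_and]
      intro h; exact absurd (h.trans_le ht) (not_lt.2 (by positivity))
    have h2 : (β - α) / 2 * t ≤ 0 :=
      mul_nonpos_of_nonneg_of_nonpos (by linarith) ht
    rw [h1, measure_empty, eq_comm, ENNReal.ofReal_eq_zero.2 h2]
  · set R := Real.sqrt t with hR
    have hR0 : 0 < R := Real.sqrt_pos.2 ht
    have hRt : R ^ 2 = t := Real.sq_sqrt ht.le
    set S := {p : ℝ × ℝ | p.1 ^ 2 + p.2 ^ 2 < t ∧ P p} with hS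
    have hSm : MeasurableSet S := by
      have : S = {p : ℝ × ℝ | p.1 ^ 2 + p.2 ^ 2 < t} ∩ {p | P p} := rfl
      rw [this]
      exact (measurableSet_lt (by fun_prop) measurable_const).inter hP
    have hSsub : S ⊆ Ioo (-R) R ×ˢ Ioo (-R) R := by
      rintro ⟨x, y⟩ ⟨h1, -⟩
      have hx : x ^ 2 < R ^ 2 := by nlinarith [sq_nonneg y]
      have hy : y ^ 2 < R ^ 2 := by nlinarith [sq_nonneg x]
      exact ⟨LunePP.sq_lt_abs_lt hR0 hx, LunePP.sq_lt_abs_lt hR0 hy⟩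
    have hfin : volume S ≠ ⊤ := by
      refine ne_of_lt (lt_of_le_of_lt (measure_mono hSsub) ?_)
      rw [Measure.volume_eq_prod ℝ ℝ, Measure.prod_prod]
      exact ENNReal.mul_lt_top (by simp) (by simp)
    have key : ∫ p : ℝ × ℝ, S.indicator (fun _ => (1 : ℝ)) p = (β - α) / 2 * t := by
      rw [← integral_comp_polarCoord_symm]
      have heq : ∀ p ∈ polarCoord.target,
          p.1 • S.indicator (fun _ => (1 : ℝ)) (polarCoord.symm p)
            = (Ioo 0 R ×ˢ Ioo α β).indicator (fun q : ℝ × ℝ => q.1) p := by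
        rintro ⟨r, θ⟩ hp
        obtain ⟨hr, hθ⟩ : 0 < r ∧ θ ∈ Ioo (-π) π := by
          simpa [polarCoord, Set.mem_Ioi] using hp
        have hsymm : polarCoord.symm (r, θ) = (r * Real.cos θ, r * Real.sin θ) := by
          simp [polarCoord]
        have hmem : polarCoord.symm (r, θ) ∈ S ↔ (r, θ) ∈ Ioo 0 R ×ˢ Ioo α β := by
          rw [hsymm]
          simp only [hS, mem_setOf_eq, Set.mem_prod, Set.mem_Ioo]
          constructor
          · rintro ⟨h1, h2⟩
            have hr2 : r ^ 2 < t := by nlinarith [Real.sin_sq_add_cos_sq θ]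
            have : r < R := by
              have := Real.sqrt_lt_sqrt (sq_nonneg r) (hRt ▸ hr2)
              rwa [Real.sqrt_sq hr.le, Real.sqrt_sq hR0.le] at this
            exact ⟨⟨hr, this⟩, (hchar r θ hr hθ).1 h2⟩
          · rintro ⟨⟨h1, h2⟩, h3⟩
            refine ⟨?_, (hchar r θ hr hθ).2 h3⟩
            have h4 : r ^ 2 < t := by nlinarith
            nlinarith [Real.sin_sq_add_cos_sq θ]
        by_cases hmem' : polarCoord.symm (r, θ) ∈ S
        · rw [Set.indicator_of_mem hmem', Set.indicator_of_mem (hmem.1 hmem')]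
          simp
        · rw [Set.indicator_of_notMem hmem',
            Set.indicator_of_notMem (fun h => hmem' (hmem.2 h))]
          simp
      rw [setIntegral_congr_fun polarCoord.open_target.measurableSet heq,
        setIntegral_indicator (measurableSet_Ioo.prod measurableSet_Ioo),
        Set.inter_eq_self_of_subset_right ?sub]
      case sub =>
        rintro ⟨r, θ⟩ ⟨h1, h2⟩
        simp only [Set.mem_Ioo] at h2
        exact ⟨h1.1, by constructor <;> linarith [h2.1, h2.2]⟩
      calc ∫ p in Ioo 0 R ×ˢ Ioo α β, p.1
          = (∫ r in Ioo 0 R, r) * ∫ θ in Ioo α β, (1:ℝ) := by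
            have h3 := setIntegral_prod_mul (μ := (volume : Measure ℝ))
              (ν := (volume : Measure ℝ)) (fun r : ℝ => r) (fun _ : ℝ => (1:ℝ))
              (Ioo 0 R) (Ioo α β)
            rw [Measure.volume_eq_prod]
            simpa using h3
        _ = (β - α) / 2 * t := by
            rw [← integral_Ioc_eq_integral_Ioo, ← integral_of_le hR0.le, integral_id]
            simp only [setIntegral_const, smul_eq_mul, mul_one, Measure.real, Real.volume_Ioo]
            rw [ENNReal.toReal_ofReal (by linarith)]
            rw [hR, Real.sq_sqrt ht.le]
            ring
    have h2 : ∫ p : ℝ × ℝ, S.indicator (fun _ => (1 : ℝ)) p = (volume S).toReal := by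
      exact integral_indicator_one hSm
    rw [h2] at key
    rw [← key, ENNReal.ofReal_toReal hfin]

/-- Volume of a slice-decomposed solid of revolution type region. -/
theorem LunePP.ball_slice (α β : ℝ) (hα : -π ≤ α) (hαβ : α ≤ β) (hβ : β ≤ π)
    (P : ℝ × ℝ → Prop) (hP : MeasurableSet {p : ℝ × ℝ | P p})
    (hchar : ∀ r θ : ℝ, 0 < r → θ ∈ Ioo (-π) π →
      (P (r * Real.cos θ, r * Real.sin θ) ↔ θ ∈ Ioo α β)) :
    volume {q : ℝ × ℝ × ℝ | q.1 ^ 2 + (q.2.1 ^ 2 + q.2.2 ^ 2) < 1 ∧ P q.2}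
      = ENNReal.ofReal ((β - α) / 2 * (4 / 3)) := by
  have sector_area := fun t => LunePP.sector_area α β hα hαβ hβ t P hP hchar
  set C := (β - α) / 2 with hC
  have hC0 : 0 ≤ C := by rw [hC]; linarith
  set S := {q : ℝ × ℝ × ℝ | q.1 ^ 2 + (q.2.1 ^ 2 + q.2.2 ^ 2) < 1 ∧ P q.2} with hSdef
  have hSm : MeasurableSet S := by
    have : S = {q : ℝ × ℝ × ℝ | q.1 ^ 2 + (q.2.1 ^ 2 + q.2.2 ^ 2) < 1}
        ∩ ((fun q : ℝ × ℝ × ℝ => q.2) ⁻¹' {p | P p}) := rfl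
    rw [this]
    exact (measurableSet_lt (by fun_prop) measurable_const).inter (hP.preimage (by fun_prop))
  rw [Measure.volume_eq_prod ℝ (ℝ × ℝ), Measure.prod_apply hSm]
  have hslice : ∀ z : ℝ, (Prod.mk z ⁻¹' S) = {p : ℝ × ℝ | p.1 ^ 2 + p.2 ^ 2 < 1 - z ^ 2 ∧ P p} := by
    intro z; ext p
    simp only [hSdef, mem_preimage, mem_setOf_eq]
    constructor <;> rintro ⟨h1, h2⟩ <;> exact ⟨by linarith, h2⟩
  have hfun : ∀ z : ℝ, volume (Prod.mk z ⁻¹' S) = ENNReal.ofReal (C * (1 - z ^ 2)) := by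
    intro z; rw [hslice z, sector_area]
  simp only [hfun]
  have hind : (fun z : ℝ => ENNReal.ofReal (C * (1 - z ^ 2)))
      = (Ioo (-1 : ℝ) 1).indicator (fun z => ENNReal.ofReal (C * (1 - z ^ 2))) := by
    funext z
    by_cases hz : z ∈ Ioo (-1 : ℝ) 1
    · rw [indicator_of_mem hz]
    · rw [indicator_of_notMem hz]
      simp only [mem_Ioo, not_and_or, not_lt] at hz
      have : 1 - z ^ 2 ≤ 0 := by rcases hz with h | h <;> nlinarith
      exact ENNReal.ofReal_eq_zero.2 (mul_nonpos_of_nonneg_of_nonpos hC0 this)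
  rw [hind, lintegral_indicator measurableSet_Ioo]
  have hint : IntegrableOn (fun z : ℝ => C * (1 - z ^ 2)) (Ioo (-1 : ℝ) 1) := by
    exact (Continuous.integrableOn_Icc (by fun_prop)).mono_set Ioo_subset_Icc_self
  rw [← ofReal_integral_eq_lintegral_ofReal hint]
  · congr 1
    rw [← integral_Ioc_eq_integral_Ioo, ← integral_of_le (by norm_num : (-1:ℝ) ≤ 1)]
    rw [intervalIntegral.integral_const_mul]
    have : ∫ x in (-1:ℝ)..1, (1 - x ^ 2) = 4 / 3 := by
      rw [integral_sub intervalIntegrable_const (intervalIntegrable_pow 2),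
        integral_pow, intervalIntegral.integral_const]
      norm_num
    rw [this]
  · filter_upwards [ae_restrict_mem measurableSet_Ioo] with z hz
    have : 0 ≤ 1 - z ^ 2 := by
      simp only [mem_Ioo] at hz; nlinarith [hz.1, hz.2]
    positivity

theorem LunePP.cos_pos_iff_of_mem {θ : ℝ} (hθ : θ ∈ Ioo (-π) π) :
    0 < Real.cos θ ↔ θ ∈ Ioo (-(π/2)) (π/2) := by
  constructor
  · intro h
    by_contra hmem
    simp only [mem_Ioo, not_and_or, not_lt] at hmem
    rcases hmem with h1 | h1
    · have : Real.cos (-θ) ≤ 0 :=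
        Real.cos_nonpos_of_pi_div_two_le_of_le (by linarith) (by linarith [hθ.1])
      rw [Real.cos_neg] at this; linarith
    · have : Real.cos θ ≤ 0 :=
        Real.cos_nonpos_of_pi_div_two_le_of_le (by linarith) (by linarith [hθ.2, Real.pi_pos])
      linarith
  · exact fun h => Real.cos_pos_of_mem_Ioo h

theorem LunePP.wedge_char (η : ℝ) (hη0 : 0 ≤ η) (hηπ : η < π) :
    ∀ r θ : ℝ, 0 < r → θ ∈ Ioo (-π) π →
      ((0 < r * Real.cos θ ∧
        0 < Real.cos η * (r * Real.cos θ) + Real.sin η * (r * Real.sin θ))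
        ↔ θ ∈ Ioo (η - π / 2) (π / 2)) := by
  intro r θ hr hθ
  have key : Real.cos η * (r * Real.cos θ) + Real.sin η * (r * Real.sin θ)
      = r * Real.cos (θ - η) := by
    rw [Real.cos_sub]; ring
  rw [key]
  have hr1 : (0 < r * Real.cos θ) ↔ 0 < Real.cos θ := mul_pos_iff_of_pos_left hr
  have hr2 : (0 < r * Real.cos (θ - η)) ↔ 0 < Real.cos (θ - η) := mul_pos_iff_of_pos_left hr
  rw [hr1, hr2]
  constructor
  · rintro ⟨h1, h2⟩
    have hθ2 := (LunePP.cos_pos_iff_of_mem hθ).1 h1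
    simp only [mem_Ioo] at hθ2 ⊢
    refine ⟨?_, hθ2.2⟩
    by_contra hc
    push_neg at hc
    have : Real.cos (-(θ - η)) ≤ 0 :=
      Real.cos_nonpos_of_pi_div_two_le_of_le (by linarith)
        (by linarith [hθ2.1, Real.pi_pos])
    rw [Real.cos_neg] at this; linarith
  · intro h
    simp only [mem_Ioo] at h
    constructor
    · exact Real.cos_pos_of_mem_Ioo ⟨by linarith [h.1], h.2⟩
    · exact Real.cos_pos_of_mem_Ioo ⟨by linarith [h.1], by linarith [h.2]⟩

theorem LunePP.vol_E3 (P : ℝ × ℝ → Prop) (hP : MeasurableSet {p : ℝ × ℝ | P p}) :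
    volume {y : E3 | ‖y‖ < 1 ∧ P (y 0, y 1)}
      = volume {q : ℝ × ℝ × ℝ | q.1 ^ 2 + (q.2.1 ^ 2 + q.2.2 ^ 2) < 1 ∧ P q.2} := by
  have hS3m : MeasurableSet {q : ℝ × ℝ × ℝ | q.1 ^ 2 + (q.2.1 ^ 2 + q.2.2 ^ 2) < 1 ∧ P q.2} := by
    have : {q : ℝ × ℝ × ℝ | q.1 ^ 2 + (q.2.1 ^ 2 + q.2.2 ^ 2) < 1 ∧ P q.2}
        = {q : ℝ × ℝ × ℝ | q.1 ^ 2 + (q.2.1 ^ 2 + q.2.2 ^ 2) < 1}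
          ∩ ((fun q : ℝ × ℝ × ℝ => q.2) ⁻¹' {p | P p}) := rfl
    rw [this]
    exact (measurableSet_lt (by fun_prop) measurable_const).inter (hP.preimage (by fun_prop))
  set Φ : E3 → ℝ × ℝ × ℝ := fun y =>
    (Prod.map id (MeasurableEquiv.finTwoArrow (α := ℝ)))
      ((MeasurableEquiv.piFinSuccAbove (fun _ : Fin 3 => ℝ) 2)
        ((MeasurableEquiv.toLp 2 (Fin 3 → ℝ)).symm y)) with hΦ
  have h1 : MeasurePreserving (⇑(MeasurableEquiv.toLp 2 (Fin 3 → ℝ)).symm)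
      (volume : Measure E3) (volume : Measure (Fin 3 → ℝ)) :=
    EuclideanSpace.volume_preserving_symm_measurableEquiv_toLp (Fin 3)
  have h2 : MeasurePreserving (⇑(MeasurableEquiv.piFinSuccAbove (fun _ : Fin 3 => ℝ) 2))
      (volume : Measure (Fin 3 → ℝ)) (volume : Measure (ℝ × (Fin 2 → ℝ))) :=
    volume_preserving_piFinSuccAbove (fun _ : Fin 3 => ℝ) 2
  have h3 : MeasurePreserving (Prod.map (id : ℝ → ℝ) (⇑(MeasurableEquiv.finTwoArrow (α := ℝ))))
      (volume : Measure (ℝ × (Fin 2 → ℝ))) (volume : Measure (ℝ × (ℝ × ℝ))) := by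
    rw [Measure.volume_eq_prod, Measure.volume_eq_prod]
    exact (MeasurePreserving.id volume).prod (volume_preserving_finTwoArrow ℝ)
  have hMP : MeasurePreserving Φ volume volume := (h3.comp h2).comp h1
  have happ : ∀ y : E3, Φ y = (y 2, (y 0, y 1)) := by
    intro y
    rfl
  have hset : {y : E3 | ‖y‖ < 1 ∧ P (y 0, y 1)}
      = Φ ⁻¹' {q : ℝ × ℝ × ℝ | q.1 ^ 2 + (q.2.1 ^ 2 + q.2.2 ^ 2) < 1 ∧ P q.2} := by
    ext y
    simp only [mem_setOf_eq, mem_preimage, happ y]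
    have hnorm : ‖y‖ < 1 ↔ (y 2) ^ 2 + ((y 0) ^ 2 + (y 1) ^ 2) < 1 := by
      rw [EuclideanSpace.norm_eq, Real.sqrt_lt' one_pos]
      simp [Fin.sum_univ_three, sq_abs]
      constructor <;> intro h <;> linarith
    rw [hnorm]
  rw [hset, hMP.measure_preimage hS3m.nullMeasurableSet]

theorem LunePP.exists_unit_orth (a b : E3) (ha : ‖a‖ = 1) (hb : ‖b‖ = 1)
    (hlt : InnerProductGeometry.angle a b < π) :
    ∃ v : E3, ‖v‖ = 1 ∧ ⟪a, v⟫ = 0 ∧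
      b = Real.cos (InnerProductGeometry.angle a b) • a
        + Real.sin (InnerProductGeometry.angle a b) • v := by
  set η := InnerProductGeometry.angle a b with hηdef
  have hη0 : 0 ≤ η := InnerProductGeometry.angle_nonneg a b
  have hcos : Real.cos η = ⟪a, b⟫ := by
    rw [hηdef, InnerProductGeometry.cos_angle, ha, hb]; simp
  have ha0 : a ≠ 0 := by intro h; rw [h] at ha; simp at ha
  rcases eq_or_lt_of_le hη0 with hz | hpos
  · have hba : b = a := by
      obtain ⟨-, r, hr, hbr⟩ := InnerProductGeometry.angle_eq_zero_iff.1 hz.symm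
      have h1 : ‖b‖ = |r| * ‖a‖ := by rw [hbr, norm_smul, Real.norm_eq_abs]
      rw [ha, hb] at h1
      have h2 : r = 1 := by rw [abs_of_pos hr] at h1; linarith
      rw [hbr, h2, one_smul]
    haveI : Fact (Module.finrank ℝ E3 = 2 + 1) := ⟨by simp⟩
    have hrank : Module.finrank ℝ (ℝ ∙ a)ᗮ = 2 := Submodule.finrank_orthogonal_span_singleton ha0
    have hne : (ℝ ∙ a)ᗮ ≠ ⊥ := by
      intro h; rw [h] at hrank; simp at hrank
    obtain ⟨w, hw, hw0⟩ := Submodule.exists_mem_ne_zero_of_ne_bot hne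
    refine ⟨‖w‖⁻¹ • w, norm_smul_inv_norm hw0, ?_, ?_⟩
    · rw [real_inner_smul_right]
      have : ⟪a, w⟫ = 0 :=
        (Submodule.mem_orthogonal _ w).1 hw a (Submodule.mem_span_singleton_self a)
      rw [this, mul_zero]
    · rw [← hz, Real.cos_zero, Real.sin_zero, one_smul, zero_smul, add_zero, hba]
  · have hsin : 0 < Real.sin η := Real.sin_pos_of_pos_of_lt_pi hpos hlt
    set w := b - Real.cos η • a with hw
    have e1 : ⟪b, b⟫ = 1 := by rw [real_inner_self_eq_norm_sq, hb]; norm_num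
    have e2 : ⟪a, a⟫ = 1 := by rw [real_inner_self_eq_norm_sq, ha]; norm_num
    have e3 : ⟪b, a⟫ = Real.cos η := by rw [real_inner_comm, ← hcos]
    have e4 : ⟪a, b⟫ = Real.cos η := hcos.symm
    have hwinner : ⟪w, w⟫ = 1 - Real.cos η ^ 2 := by
      rw [hw]
      simp only [inner_sub_left, inner_sub_right, real_inner_smul_left, real_inner_smul_right,
        e1, e2, e3, e4]
      ring
    have hwnorm : ‖w‖ = Real.sin η := by
      have h1 : ‖w‖ ^ 2 = 1 - Real.cos η ^ 2 := by rw [← real_inner_self_eq_norm_sq, hwinner]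
      have h2 : Real.sin η ^ 2 = 1 - Real.cos η ^ 2 := by
        have := Real.sin_sq_add_cos_sq η; linarith
      have h3 : ‖w‖ ^ 2 = Real.sin η ^ 2 := by rw [h1, h2]
      calc ‖w‖ = Real.sqrt (‖w‖ ^ 2) := by rw [Real.sqrt_sq (norm_nonneg w)]
        _ = Real.sqrt (Real.sin η ^ 2) := by rw [h3]
        _ = Real.sin η := Real.sqrt_sq hsin.le
    refine ⟨(Real.sin η)⁻¹ • w, ?_, ?_, ?_⟩
    · rw [norm_smul, Real.norm_eq_abs, abs_of_pos (inv_pos.2 hsin), hwnorm,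
        inv_mul_cancel₀ hsin.ne']
    · rw [real_inner_smul_right, hw, inner_sub_right, real_inner_smul_right,
        real_inner_self_eq_norm_sq, ha, ← hcos]
      ring
    · rw [smul_smul, mul_inv_cancel₀ hsin.ne', one_smul, hw]
      abel

theorem LunePP.exists_onb (a v : E3) (ha : ‖a‖ = 1) (hv : ‖v‖ = 1) (hav : ⟪a, v⟫ = 0) :
    ∃ B : OrthonormalBasis (Fin 3) ℝ E3, B 0 = a ∧ B 1 = v := by
  set w : Fin 3 → E3 := ![a, v, 0] with hwdef
  have hcard : Module.finrank ℝ E3 = Fintype.card (Fin 3) := by simp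
  have horth : Orthonormal ℝ (({0, 1} : Set (Fin 3)).restrict w) := by
    constructor
    · rintro ⟨i, hi⟩
      simp only [Set.mem_insert_iff, Set.mem_singleton_iff] at hi
      rcases hi with rfl | rfl <;> simp [hwdef, ha, hv, Set.restrict, Set.domRestrict_apply]
    · rintro ⟨i, hi⟩ ⟨j, hj⟩ hij
      simp only [Set.mem_insert_iff, Set.mem_singleton_iff] at hi hj
      have hij' : i ≠ j := by
        intro h; apply hij; exact Subtype.ext h
      simp only [Set.restrict, Set.domRestrict_apply]
      rcases hi with rfl | rfl <;> rcases hj with rfl | rfl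
      · exact absurd rfl hij'
      · simpa only [hwdef, Matrix.cons_val_zero, Matrix.cons_val_one, Matrix.head_cons] using hav
      · simp only [hwdef, Matrix.cons_val_zero, Matrix.cons_val_one, Matrix.head_cons]
        rw [real_inner_comm]; exact hav
      · exact absurd rfl hij'
  obtain ⟨B, hB⟩ := horth.exists_orthonormalBasis_extension_of_card_eq hcard
  exact ⟨B, by simpa [hwdef] using hB 0 (by simp), by simpa [hwdef] using hB 1 (by simp)⟩

end Aux

/-- For unit vectors `a, b` with angle `η` between them, the lune where both inner
products are positive has uniform measure `(π - η)/(2π)`. -/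
theorem lune_pp_measure (a b : E3) (ha : ‖a‖ = 1) (hb : ‖b‖ = 1) :
    uniformS2 {s : S2 | 0 < ⟪a, (s : E3)⟫ ∧ 0 < ⟪b, (s : E3)⟫}
      = ENNReal.ofReal ((Real.pi - InnerProductGeometry.angle a b) / (2 * Real.pi)) := by
  open Set Real in
  open scoped Pointwise in
  set η := InnerProductGeometry.angle a b with hηdef
  have hη0 : 0 ≤ η := InnerProductGeometry.angle_nonneg a b
  have hηπ : η ≤ π := InnerProductGeometry.angle_le_pi a b
  rcases eq_or_lt_of_le hηπ with hpi | hlt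
  · -- degenerate case: b = -a and the lune is empty
    have hba : b = -a := by
      obtain ⟨-, r, hr, hbr⟩ := InnerProductGeometry.angle_eq_pi_iff.1 hpi
      have h1 : ‖b‖ = |r| * ‖a‖ := by rw [hbr, norm_smul, Real.norm_eq_abs]
      rw [ha, hb] at h1
      have h2 : r = -1 := by rw [abs_of_neg hr] at h1; linarith
      rw [hbr, h2]; simp
    have hempty : {s : S2 | 0 < ⟪a, (s : E3)⟫ ∧ 0 < ⟪b, (s : E3)⟫} = ∅ := by
      ext s
      simp only [mem_setOf_eq, mem_empty_iff_false, iff_false, not_and]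
      intro h1 h2
      rw [hba, inner_neg_left] at h2
      linarith
    rw [hempty, measure_empty, ← hpi]
    simp
  · obtain ⟨v, hv1, hav, hbav⟩ := LunePP.exists_unit_orth a b ha hb hlt
    obtain ⟨B, hB0, hB1⟩ := LunePP.exists_onb a v ha hv1 hav
    -- coordinates
    have hea : B.repr a = EuclideanSpace.single 0 (1:ℝ) := by rw [← hB0]; exact B.repr_self 0
    have hev : B.repr v = EuclideanSpace.single 1 (1:ℝ) := by rw [← hB1]; exact B.repr_self 1
    have hinner_a : ∀ x : E3, ⟪a, x⟫ = B.repr x 0 := by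
      intro x
      conv_lhs => rw [← B.repr.inner_map_map a x]
      rw [hea, EuclideanSpace.inner_single_left]
      simp
    have hinner_v : ∀ x : E3, ⟪v, x⟫ = B.repr x 1 := by
      intro x
      conv_lhs => rw [← B.repr.inner_map_map v x]
      rw [hev, EuclideanSpace.inner_single_left]
      simp
    have hinner_b : ∀ x : E3, ⟪b, x⟫ = Real.cos η * B.repr x 0 + Real.sin η * B.repr x 1 := by
      intro x
      rw [hbav, inner_add_left, real_inner_smul_left, real_inner_smul_left,
        hinner_a, hinner_v]
    set P : ℝ × ℝ → Prop :=
      fun p => 0 < p.1 ∧ 0 < Real.cos η * p.1 + Real.sin η * p.2 with hPdef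
    have hPm : MeasurableSet {p : ℝ × ℝ | P p} := by
      have : {p : ℝ × ℝ | P p} = {p : ℝ × ℝ | 0 < p.1}
          ∩ {p : ℝ × ℝ | 0 < Real.cos η * p.1 + Real.sin η * p.2} := rfl
      rw [this]
      exact (measurableSet_lt measurable_const (by fun_prop)).inter
        (measurableSet_lt measurable_const (by fun_prop))
    -- measurability of the lune
    have hinner_am : Measurable fun x : E3 => ⟪a, x⟫ :=
      (continuous_const.inner continuous_id).measurable
    have hinner_bm : Measurable fun x : E3 => ⟪b, x⟫ :=
      (continuous_const.inner continuous_id).measurable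
    have hLm : MeasurableSet {s : S2 | 0 < ⟪a, (s : E3)⟫ ∧ 0 < ⟪b, (s : E3)⟫} := by
      have : {s : S2 | 0 < ⟪a, (s : E3)⟫ ∧ 0 < ⟪b, (s : E3)⟫}
          = Subtype.val ⁻¹' {x : E3 | 0 < ⟪a, x⟫ ∧ 0 < ⟪b, x⟫} := rfl
      rw [this]
      exact ((measurableSet_lt measurable_const hinner_am).inter
        (measurableSet_lt measurable_const hinner_bm)).preimage measurable_subtype_coe
    -- the cone over the lune
    have hcone_eq : Ioo (0:ℝ) 1 • (Subtype.val '' {s : S2 | 0 < ⟪a, (s : E3)⟫ ∧ 0 < ⟪b, (s : E3)⟫})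
        = {x : E3 | ‖x‖ < 1 ∧ 0 < ⟪a, x⟫ ∧ 0 < ⟪b, x⟫} := by
      ext x
      constructor
      · intro hx
        obtain ⟨r, hr, y, hy, rfl⟩ := Set.mem_smul.1 hx
        obtain ⟨⟨z, hz⟩, hmem, rfl⟩ := hy
        have hz1 : ‖z‖ = 1 := by simpa using hz
        simp only [mem_Ioo] at hr
        refine ⟨by rw [norm_smul, Real.norm_eq_abs, abs_of_pos hr.1, hz1]; simpa using hr.2, ?_, ?_⟩
        · rw [real_inner_smul_right]; exact mul_pos hr.1 hmem.1
        · rw [real_inner_smul_right]; exact mul_pos hr.1 hmem.2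
      · rintro ⟨h1, h2, h3⟩
        have hx0 : x ≠ 0 := by
          intro h; rw [h, inner_zero_right] at h2; exact lt_irrefl 0 h2
        have hxn : 0 < ‖x‖ := norm_pos_iff.2 hx0
        refine Set.mem_smul.2 ⟨‖x‖, by simp [mem_Ioo, hxn, h1], ‖x‖⁻¹ • x, ?_, ?_⟩
        · refine ⟨⟨‖x‖⁻¹ • x, by
              rw [mem_sphere_zero_iff_norm]; exact norm_smul_inv_norm hx0⟩, ⟨?_, ?_⟩, rfl⟩
          · rw [real_inner_smul_right]; exact mul_pos (inv_pos.2 hxn) h2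
          · rw [real_inner_smul_right]; exact mul_pos (inv_pos.2 hxn) h3
        · rw [smul_smul, mul_inv_cancel₀ hxn.ne', one_smul]
      -- done
    -- volume of the cone
    have hTm : MeasurableSet {y : E3 | ‖y‖ < 1 ∧ P (y 0, y 1)} := by
      have hc : Measurable fun y : E3 => (y 0, y 1) := by
        have hm := (MeasurableEquiv.toLp 2 (Fin 3 → ℝ)).symm.measurable
        exact ((measurable_pi_apply 0).comp hm).prod ((measurable_pi_apply 1).comp hm)
      have : {y : E3 | ‖y‖ < 1 ∧ P (y 0, y 1)}
          = {y : E3 | ‖y‖ < 1} ∩ ((fun y : E3 => (y 0, y 1)) ⁻¹' {p | P p}) := rfl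
      rw [this]
      exact (measurableSet_lt measurable_norm measurable_const).inter (hPm.preimage hc)
    have hpre : {x : E3 | ‖x‖ < 1 ∧ 0 < ⟪a, x⟫ ∧ 0 < ⟪b, x⟫}
        = ⇑B.repr ⁻¹' {y : E3 | ‖y‖ < 1 ∧ P (y 0, y 1)} := by
      ext x
      simp only [mem_setOf_eq, mem_preimage, hPdef]
      rw [hinner_a, hinner_b, ← B.repr.norm_map x]
    have hvol_cone : volume {x : E3 | ‖x‖ < 1 ∧ 0 < ⟪a, x⟫ ∧ 0 < ⟪b, x⟫}
        = ENNReal.ofReal ((π - η) / 2 * (4 / 3)) := by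
      rw [hpre, (B.measurePreserving_repr).measure_preimage hTm.nullMeasurableSet,
        LunePP.vol_E3 P hPm,
        LunePP.ball_slice (η - π / 2) (π / 2)
          (by linarith [Real.pi_pos]) (by linarith) (by linarith [Real.pi_pos]) P hPm
          (LunePP.wedge_char η hη0 hlt)]
      congr 1
      ring
    have hvol_ball : volume (Metric.ball (0:E3) 1) = ENNReal.ofReal (π * (4 / 3)) := by
      have h1 : Metric.ball (0:E3) 1 = {y : E3 | ‖y‖ < 1 ∧ (fun _ : ℝ × ℝ => True) (y 0, y 1)} := by
        ext y; simp [mem_ball_zero_iff]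
      have h2 : MeasurableSet {p : ℝ × ℝ | (fun _ : ℝ × ℝ => True) p} := by
        have : {p : ℝ × ℝ | (fun _ : ℝ × ℝ => True) p} = Set.univ := rfl
        rw [this]; exact MeasurableSet.univ
      rw [h1, LunePP.vol_E3 _ h2,
        LunePP.ball_slice (-π) π le_rfl (by linarith [Real.pi_pos]) le_rfl _ h2
          (fun r θ hr hθ => ⟨fun _ => hθ, fun _ => trivial⟩)]
      congr 1
      ring
    -- assemble
    have hS : sphereMeasure {s : S2 | 0 < ⟪a, (s : E3)⟫ ∧ 0 < ⟪b, (s : E3)⟫}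
        = 3 * ENNReal.ofReal ((π - η) / 2 * (4 / 3)) := by
      rw [sphereMeasure, Measure.toSphere_apply' _ hLm, hcone_eq, hvol_cone]
      norm_num
    have hU : sphereMeasure Set.univ = 3 * ENNReal.ofReal (π * (4 / 3)) := by
      rw [sphereMeasure, Measure.toSphere_apply_univ, hvol_ball]
      norm_num
    rw [uniformS2, Measure.smul_apply, smul_eq_mul, hS, hU]
    have h3 : (3:ℝ≥0∞) = ENNReal.ofReal 3 := by simp
    rw [h3, ← ENNReal.ofReal_mul (by norm_num : (0:ℝ) ≤ 3),
      ← ENNReal.ofReal_mul (by norm_num : (0:ℝ) ≤ 3),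
      ← ENNReal.ofReal_inv_of_pos (by positivity : (0:ℝ) < 3 * (π * (4 / 3))),
      ← ENNReal.ofReal_mul (by positivity : (0:ℝ) ≤ (3 * (π * (4 / 3)))⁻¹)]
    congr 1
    have hπ : π ≠ 0 := Real.pi_ne_zero
    field_simp
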